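/- Suppose for each n in a finite set C and each i in an associated finite set Ω̃_n ⊆ C* we have v_i ≤ v_n Φ_i / Φ_n with v_n, Φ_n > 0; suppose ∑_{i∈Ω̃_n} Φ_i ≤ 2 and Φ_n ≥ c for a constant c > 0; and suppose C* ⊆ ⋃_{n∈C} Ω̃_n. Then ∑_{n∈C} v_n ≥ (c/2) ∑_{i∈C*} v_i. -/

import Mathlib

lemma sum_biUnion_le_aux {ι : Type} [DecidableEq ι] (f : ι → ℝ) (hf : ∀ x, 0 ≤ f x)
    (s : Finset ι) (t : ι → Finset ι) :
    ∑ x ∈ s.biUnion t, f x ≤ ∑ n ∈ s, ∑ x ∈ t n, f x := by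
  induction s using Finset.induction_on with
  | empty => simp
  | insert _ _ ha ih =>
    rename_i a s
    rw [Finset.biUnion_insert, Finset.sum_insert ha]
    have h1 : ∑ x ∈ t a ∪ s.biUnion t, f x + ∑ x ∈ t a ∩ s.biUnion t, f x
        = ∑ x ∈ t a, f x + ∑ x ∈ s.biUnion t, f x := Finset.sum_union_inter
    have h2 : 0 ≤ ∑ x ∈ t a ∩ s.biUnion t, f x := Finset.sum_nonneg fun x _ => hf x
    linarith [ih]

/-- Abstract covering lemma: if for each `n ∈ C` and each `i ∈ Ω̃ n ⊆ C*` we have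
`v_i ≤ v_n Φ_i / Φ_n`, the occupancies in each `Ω̃ n` sum to at most `2`, every
occupancy is at least `c > 0`, and the sets `Ω̃ n` cover `C*`, then
`∑_{n ∈ C} v_n ≥ (c/2) ∑_{i ∈ C*} v_i`. -/
theorem stmt_10 (ι : Type) [DecidableEq ι] (v Φ : ι → ℝ)
    (C Cstar : Finset ι) (Ω : ι → Finset ι) (c : ℝ) (hc : 0 < c)
    (hv : ∀ n, 0 < v n) (hΦ : ∀ n, 0 < Φ n)
    (hsub : ∀ n ∈ C, Ω n ⊆ Cstar)
    (hbound : ∀ n ∈ C, ∀ i ∈ Ω n, v i ≤ v n * Φ i / Φ n)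
    (hload : ∀ n ∈ C, ∑ i ∈ Ω n, Φ i ≤ 2)
    (hocc : ∀ n, c ≤ Φ n)
    (hcover : Cstar ⊆ C.biUnion Ω) :
    ∑ n ∈ C, v n ≥ c / 2 * ∑ i ∈ Cstar, v i := by
  have h1 : ∑ i ∈ Cstar, v i ≤ ∑ x ∈ C.biUnion Ω, v x :=
    Finset.sum_le_sum_of_subset_of_nonneg hcover fun x _ _ => (hv x).le
  have h2 : ∑ x ∈ C.biUnion Ω, v x ≤ ∑ n ∈ C, ∑ i ∈ Ω n, v i :=
    sum_biUnion_le_aux v (fun x => (hv x).le) C Ω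
  have h3 : ∀ n ∈ C, ∑ i ∈ Ω n, v i ≤ 2 / c * v n := by
    intro n hn
    have hΦn := hΦ n
    calc ∑ i ∈ Ω n, v i ≤ ∑ i ∈ Ω n, v n * Φ i / Φ n :=
          Finset.sum_le_sum (hbound n hn)
      _ = (v n / Φ n) * ∑ i ∈ Ω n, Φ i := by
          rw [Finset.mul_sum]; apply Finset.sum_congr rfl; intro i _; ring
      _ ≤ (v n / Φ n) * 2 := by
          apply mul_le_mul_of_nonneg_left (hload n hn)
          exact div_nonneg (hv n).le (hΦ n).le
      _ ≤ (v n / c) * 2 := by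
          apply mul_le_mul_of_nonneg_right _ (by norm_num)
          exact div_le_div_of_nonneg_left (hv n).le hc (hocc n)
      _ = 2 / c * v n := by ring
  have h4 : ∑ n ∈ C, ∑ i ∈ Ω n, v i ≤ 2 / c * ∑ n ∈ C, v n := by
    rw [Finset.mul_sum]; exact Finset.sum_le_sum h3
  have h5 := h1.trans (h2.trans h4)
  have hc2 : (0:ℝ) ≤ c / 2 := by positivity
  calc c / 2 * ∑ i ∈ Cstar, v i ≤ c / 2 * (2 / c * ∑ n ∈ C, v n) :=
        mul_le_mul_of_nonneg_left h5 hc2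
    _ = ∑ n ∈ C, v n := by field_simp
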